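/- For every ε ∈ (0,1) there exists a continuous selector x ↦ (a*(x), y*(x)) ∈ Γ_ā(x) on K_x such that f(x, a*(x), y*(x)) − V_ā(x) ≤ ε and a*(x) ≤ a_UB + 1/L_af for all x ∈ K_x. -/

import Mathlib

/-- Truncated feasible set `Γ_ā(x)`. -/
def GammaBar {X Y S : Type*} (Ky : Set Y) (aLow abar : ℝ)
    (I : S → X → ℝ → Y → ℝ) (x : X) : Set (ℝ × Y) :=
  {p | p.1 ∈ Set.Icc aLow abar ∧ p.2 ∈ Ky ∧ ∀ s, 0 ≤ I s x p.1 p.2}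

/-- Truncated value `V_ā(x)`. -/
noncomputable def VBar {X Y S : Type*} (Ky : Set Y) (aLow abar : ℝ)
    (f : X → ℝ → Y → ℝ) (I : S → X → ℝ → Y → ℝ) (x : X) : ℝ :=
  sInf ((fun p : ℝ × Y => f x p.1 p.2) '' GammaBar Ky aLow abar I x)

set_option maxHeartbeats 1000000 in
/-- in the full CSIP setting there exists, for every `ε ∈ (0,1)`, a continuous
selector `x ↦ (a*(x), y*(x)) ∈ Γ_ā(x)` on `Kx` with `f(x,a*(x),y*(x)) − V_ā(x) ≤ ε` and
`a*(x) ≤ aUB + 1/Laf`. -/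
theorem stmt10 {nx ny : ℕ} {S : Type*}
    (Kx : Set (Fin nx → ℝ)) (hKx : IsCompact Kx)
    (Ky : Set (Fin ny → ℝ)) (hKycomp : IsCompact Ky) (hKyconv : Convex ℝ Ky)
    (hKyne : Ky.Nonempty)
    (aLow : ℝ) (f : (Fin nx → ℝ) → ℝ → (Fin ny → ℝ) → ℝ)
    (I : S → (Fin nx → ℝ) → ℝ → (Fin ny → ℝ) → ℝ)
    (Lf : NNReal)
    (hfLip : ∀ x ∈ Kx, LipschitzOnWith Lf
      (fun p : ℝ × (Fin ny → ℝ) => f x p.1 p.2) (Set.Ici aLow ×ˢ Ky))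
    (hfcont : ContinuousOn
      (fun q : (Fin nx → ℝ) × ℝ × (Fin ny → ℝ) => f q.1 q.2.1 q.2.2)
      (Kx ×ˢ Set.Ici aLow ×ˢ Ky))
    (hfconv : ∀ x ∈ Kx,
      ConvexOn ℝ (Set.Ici aLow ×ˢ Ky) (fun p : ℝ × (Fin ny → ℝ) => f x p.1 p.2))
    (Laf : ℝ) (hLaf : 0 < Laf)
    (hfslope : ∀ x ∈ Kx, ∀ y ∈ Ky, ∀ a1 a2 : ℝ, aLow ≤ a2 → a2 ≤ a1 →
      Laf * (a1 - a2) ≤ f x a1 y - f x a2 y)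
    (LI : NNReal)
    (hILip : ∀ s : S, LipschitzOnWith LI
      (fun q : (Fin nx → ℝ) × ℝ × (Fin ny → ℝ) => I s q.1 q.2.1 q.2.2)
      (Kx ×ˢ Set.Ici aLow ×ˢ Ky))
    (hIconc : ∀ s : S, ∀ x ∈ Kx,
      ConcaveOn ℝ (Set.Ici aLow ×ˢ Ky) (fun p : ℝ × (Fin ny → ℝ) => I s x p.1 p.2))
    (LaI : ℝ) (hLaI : 0 < LaI)
    (hIslope : ∀ s : S, ∀ x ∈ Kx, ∀ y ∈ Ky, ∀ a1 a2 : ℝ, aLow ≤ a2 → a2 ≤ a1 →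
      LaI * (a1 - a2) ≤ I s x a1 y - I s x a2 y)
    (M : ℝ)
    (hM : IsGLB {z : ℝ | ∃ s : S, ∃ x ∈ Kx, ∃ y ∈ Ky, z = I s x aLow y} M) :
    ∀ ε : ℝ, 0 < ε → ε < 1 →
      ∃ sel : (Fin nx → ℝ) → ℝ × (Fin ny → ℝ),
        ContinuousOn sel Kx ∧
        ∀ x ∈ Kx,
          sel x ∈ GammaBar Ky aLow (aLow + |M| / LaI + 1 / Laf + 2) I x ∧
          f x (sel x).1 (sel x).2
            - VBar Ky aLow (aLow + |M| / LaI + 1 / Laf + 2) f I x ≤ ε ∧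
          (sel x).1 ≤ aLow + |M| / LaI + 1 / Laf := by
  intro ε hε0 hε1
  obtain ⟨y₀, hy₀⟩ := hKyne
  rcases Kx.eq_empty_or_nonempty with hKxe | ⟨x₀', hx₀'⟩
  · refine ⟨fun _ => (aLow, y₀), ?_, ?_⟩
    · rw [hKxe]; exact continuousOn_empty _
    · intro x hx; rw [hKxe] at hx; exact absurd hx (Set.notMem_empty x)
  set abar : ℝ := aLow + |M| / LaI + 1 / Laf + 2 with habar_def
  set aUB : ℝ := aLow + |M| / LaI with haUB_def
  clear_value abar aUB
  have hMd : (0:ℝ) ≤ |M| / LaI := div_nonneg (abs_nonneg M) hLaI.le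
  have haUB : aLow ≤ aUB := by rw [haUB_def]; linarith
  have hLafinv : (0:ℝ) < 1 / Laf := by positivity
  have habar1 : aUB + 1 / Laf ≤ abar := by rw [habar_def, haUB_def]; linarith
  have habar0 : aUB ≤ abar := by linarith
  have hMlb : ∀ s, ∀ x ∈ Kx, ∀ y ∈ Ky, M ≤ I s x aLow y := fun s x hx y hy =>
    hM.1 ⟨s, x, hx, y, hy, rfl⟩
  have hfeas : ∀ x ∈ Kx, ∀ y ∈ Ky, ∀ a, aUB ≤ a → ∀ s, 0 ≤ I s x a y := by
    intro x hx y hy a ha s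
    have h1 := hIslope s x hx y hy a aLow le_rfl (haUB.trans ha)
    have h2 := hMlb s x hx y hy
    have h4 : LaI * (aUB - aLow) ≤ LaI * (a - aLow) :=
      mul_le_mul_of_nonneg_left (by linarith) hLaI.le
    have h5 : LaI * (aUB - aLow) = |M| := by
      rw [haUB_def]; field_simp; ring
    have h6 := neg_abs_le M
    linarith
  have hGmem : ∀ x ∈ Kx, ∀ y ∈ Ky, ∀ a, aUB ≤ a → a ≤ abar →
      ((a, y) : ℝ × (Fin ny → ℝ)) ∈ GammaBar Ky aLow abar I x :=
    fun x hx y hy a ha hab => ⟨⟨haUB.trans ha, hab⟩, hy, hfeas x hx y hy a ha⟩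
  have hK3 : IsCompact (Kx ×ˢ (Set.Icc aLow abar ×ˢ Ky)) :=
    hKx.prod ((isCompact_Icc).prod hKycomp)
  have hFc : ContinuousOn (fun q : (Fin nx → ℝ) × ℝ × (Fin ny → ℝ) => f q.1 q.2.1 q.2.2)
      (Kx ×ˢ (Set.Icc aLow abar ×ˢ Ky)) :=
    hfcont.mono (Set.prod_mono subset_rfl (Set.prod_mono Set.Icc_subset_Ici_self subset_rfl))
  obtain ⟨C, hC⟩ := hK3.exists_bound_of_continuousOn hFc
  have hC' : ∀ x ∈ Kx, ∀ a ∈ Set.Icc aLow abar, ∀ y ∈ Ky, |f x a y| ≤ C := by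
    intro x hx a ha y hy
    have := hC (x, a, y) ⟨hx, ha, hy⟩
    simpa [Real.norm_eq_abs] using this
  have hC0 : (0:ℝ) ≤ C := (abs_nonneg _).trans (hC' x₀' hx₀' aUB ⟨haUB, habar0⟩ y₀ hy₀)
  have hBdd : ∀ x ∈ Kx, BddBelow
      ((fun p : ℝ × (Fin ny → ℝ) => f x p.1 p.2) '' GammaBar Ky aLow abar I x) := by
    intro x hx
    refine ⟨-C, ?_⟩
    rintro z ⟨p, hp, rfl⟩
    have h := abs_le.mp (hC' x hx p.1 hp.1 p.2 hp.2.1)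
    linarith [h.1]
  have hVle : ∀ x ∈ Kx, ∀ p ∈ GammaBar Ky aLow abar I x,
      VBar Ky aLow abar f I x ≤ f x p.1 p.2 := fun x hx p hp =>
    csInf_le (hBdd x hx) ⟨p, hp, rfl⟩
  have hVnear : ∀ x ∈ Kx, ∀ η : ℝ, 0 < η → ∃ p ∈ GammaBar Ky aLow abar I x,
      f x p.1 p.2 < VBar Ky aLow abar f I x + η := by
    intro x hx η hη
    have hne : ((fun p : ℝ × (Fin ny → ℝ) => f x p.1 p.2) ''
        GammaBar Ky aLow abar I x).Nonempty :=
      ⟨_, ⟨(aUB, y₀), hGmem x hx y₀ hy₀ aUB le_rfl habar0, rfl⟩⟩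
    obtain ⟨z, ⟨p, hp, rfl⟩, hz⟩ := Real.lt_sInf_add_pos hne hη
    exact ⟨p, hp, hz⟩
  have haBound : ∀ x ∈ Kx, ∀ p ∈ GammaBar Ky aLow abar I x, ∀ η : ℝ, 0 ≤ η →
      f x p.1 p.2 ≤ VBar Ky aLow abar f I x + η → p.1 ≤ aUB + η / Laf := by
    intro x hx p hp η hη hfp
    rcases le_or_gt p.1 aUB with h | h
    · have : 0 ≤ η / Laf := div_nonneg hη hLaf.le
      linarith
    · have h1 := hfslope x hx p.2 hp.2.1 p.1 aUB haUB h.le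
      have h2 := hVle x hx (aUB, p.2) (hGmem x hx p.2 hp.2.1 aUB le_rfl habar0)
      have h3 : Laf * (p.1 - aUB) ≤ η := by linarith
      have h4 : p.1 - aUB ≤ η / Laf := by
        rw [le_div_iff₀ hLaf]; linarith [mul_comm Laf (p.1 - aUB)]
      linarith
  have hUC : ∀ θ : ℝ, 0 < θ → ∃ δ : ℝ, 0 < δ ∧ ∀ x ∈ Kx, ∀ x' ∈ Kx, dist x x' ≤ δ →
      ∀ a ∈ Set.Icc aLow abar, ∀ y ∈ Ky, |f x a y - f x' a y| ≤ θ := by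
    intro θ hθ
    obtain ⟨δ, hδ, hd⟩ := Metric.uniformContinuousOn_iff_le.mp
      (hK3.uniformContinuousOn_of_continuous hFc) θ hθ
    refine ⟨δ, hδ, fun x hx x' hx' hxx' a ha y hy => ?_⟩
    have hdd : dist ((x, a, y) : (Fin nx → ℝ) × ℝ × (Fin ny → ℝ)) (x', a, y) = dist x x' := by
      simp [Prod.dist_eq, dist_self, max_eq_left dist_nonneg]
    have := hd (x, a, y) ⟨hx, ha, hy⟩ (x', a, y) ⟨hx', ha, hy⟩ (by rw [hdd]; exact hxx')
    simpa [Real.dist_eq] using this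
  have hVcomp : ∀ θ : ℝ, 0 < θ → θ ≤ 1 → ∃ δ : ℝ, 0 < δ ∧ ∀ x ∈ Kx, ∀ x' ∈ Kx,
      dist x x' ≤ δ → VBar Ky aLow abar f I x' ≤ VBar Ky aLow abar f I x + θ := by
    intro θ hθ hθ1
    obtain ⟨δ1, hδ1, hU⟩ := hUC (θ/3) (by linarith)
    set c0 : ℝ := (LI : ℝ) / LaI with hc0
    clear_value c0
    have hc0n : (0:ℝ) ≤ c0 := by rw [hc0]; exact div_nonneg LI.coe_nonneg hLaI.le
    set m : ℝ := min 1 (θ / (3 * ((Lf : ℝ) + 1))) with hm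
    clear_value m
    have hLf0 : (0:ℝ) ≤ (Lf : ℝ) := Lf.coe_nonneg
    have hmpos : 0 < m := by rw [hm]; exact lt_min one_pos (by positivity)
    set δ2 : ℝ := m / (c0 + 1) with hδ2
    clear_value δ2
    have hδ2pos : 0 < δ2 := by rw [hδ2]; positivity
    refine ⟨min δ1 δ2, lt_min hδ1 hδ2pos, fun x hx x' hx' hxx' => ?_⟩
    obtain ⟨p, hp, hfp⟩ := hVnear x hx (θ/3) (by linarith)
    have hap : p.1 ≤ aUB + (θ/3) / Laf := haBound x hx p hp (θ/3) (by linarith) hfp.le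
    have hap1 : p.1 ≤ aUB + 1 / Laf := by
      have h := (div_le_div_iff_of_pos_right hLaf).mpr (show θ/3 ≤ 1 by linarith)
      linarith
    set t : ℝ := c0 * dist x x' with ht
    clear_value t
    have htn : (0:ℝ) ≤ t := by rw [ht]; exact mul_nonneg hc0n dist_nonneg
    have htm : t ≤ m := by
      have h1 : t ≤ c0 * δ2 := by
        rw [ht]; exact mul_le_mul_of_nonneg_left (le_trans hxx' (min_le_right _ _)) hc0n
      have h2 : c0 * δ2 ≤ m := by
        rw [hδ2, ← mul_div_assoc, div_le_iff₀ (by positivity : (0:ℝ) < c0 + 1)]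
        nlinarith [hmpos.le]
      linarith
    have hm1 : m ≤ 1 := by rw [hm]; exact min_le_left _ _
    have hm2 : m ≤ θ / (3 * ((Lf:ℝ) + 1)) := by rw [hm]; exact min_le_right _ _
    have ht1 : t ≤ 1 := htm.trans hm1
    have htθ : (Lf:ℝ) * t ≤ θ/3 := by
      have h3 : t ≤ θ / (3 * ((Lf:ℝ) + 1)) := htm.trans hm2
      rw [le_div_iff₀ (by positivity : (0:ℝ) < 3 * ((Lf:ℝ) + 1))] at h3
      nlinarith
    have hp'G : ((p.1 + t, p.2) : ℝ × (Fin ny → ℝ)) ∈ GammaBar Ky aLow abar I x' := by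
      refine ⟨⟨show aLow ≤ p.1 + t by linarith [hp.1.1], show p.1 + t ≤ abar by linarith⟩,
        hp.2.1, ?_⟩
      intro s
      have h1 := hIslope s x' hx' p.2 hp.2.1 (p.1 + t) p.1 hp.1.1 (by linarith)
      have h2 : dist (I s x p.1 p.2) (I s x' p.1 p.2) ≤ (LI:ℝ) * dist x x' := by
        have hd := (hILip s).dist_le_mul (x, p.1, p.2) ⟨hx, hp.1.1, hp.2.1⟩
          (x', p.1, p.2) ⟨hx', hp.1.1, hp.2.1⟩
        have hdd : dist ((x, p.1, p.2) : (Fin nx → ℝ) × ℝ × (Fin ny → ℝ)) (x', p.1, p.2)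
            = dist x x' := by
          simp [Prod.dist_eq, dist_self, max_eq_left dist_nonneg]
        rwa [hdd] at hd
      rw [Real.dist_eq] at h2
      have h2' := abs_le.mp h2
      have h3 : LaI * t = (LI:ℝ) * dist x x' := by
        rw [ht, hc0]; field_simp
      have h4 := hp.2.2 s
      linarith [h2'.1]
    have hV' := hVle x' hx' _ hp'G
    have hLip' : |f x' (p.1 + t) p.2 - f x' p.1 p.2| ≤ (Lf:ℝ) * t := by
      have hd := (hfLip x' hx').dist_le_mul (p.1 + t, p.2)
        ⟨by simp only [Set.mem_Ici]; linarith [hp.1.1], hp.2.1⟩ (p.1, p.2) ⟨hp.1.1, hp.2.1⟩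
      have hdd : dist ((p.1 + t, p.2) : ℝ × (Fin ny → ℝ)) (p.1, p.2) = t := by
        simp [Prod.dist_eq, Real.dist_eq, dist_self, add_sub_cancel_left,
          abs_of_nonneg htn, max_eq_left htn]
      rw [hdd, Real.dist_eq] at hd
      exact hd
    have hUx : |f x p.1 p.2 - f x' p.1 p.2| ≤ θ/3 :=
      hU x hx x' hx' (le_trans hxx' (min_le_left _ _)) p.1 hp.1 p.2 hp.2.1
    have e1 := abs_le.mp hLip'
    have e2 := abs_le.mp hUx
    linarith [e1.1, e2.1]
  set B : ℝ := aUB + 1 / Laf with hB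
  clear_value B
  have hconvdom : Convex ℝ ((Set.Ici aLow ×ˢ Ky) : Set (ℝ × (Fin ny → ℝ))) :=
    (convex_Ici _).prod hKyconv
  set Φ : (Fin nx → ℝ) → Set (ℝ × (Fin ny → ℝ)) := fun x =>
    {p | p ∈ Set.Ici aLow ×ˢ Ky ∧ (∀ s, 0 ≤ I s x p.1 p.2) ∧
      f x p.1 p.2 ≤ VBar Ky aLow abar f I x + ε ∧ p.1 ≤ B} with hΦ
  clear_value Φ
  have hΦconv : ∀ x ∈ Kx, Convex ℝ (Φ x) := by
    intro x hx
    simp only [hΦ, Set.mem_setOf_eq]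
    intro p hp q hq a b ha hb hab
    obtain ⟨hpdom, hpI, hpf, hpa⟩ := hp
    obtain ⟨hqdom, hqI, hqf, hqa⟩ := hq
    refine ⟨hconvdom hpdom hqdom ha hb hab, ?_, ?_, ?_⟩
    · intro s
      have h1 := (hIconc s x hx).2 hpdom hqdom ha hb hab
      simp only [smul_eq_mul] at h1
      have h2 : 0 ≤ a * I s x p.1 p.2 := mul_nonneg ha (hpI s)
      have h3 : 0 ≤ b * I s x q.1 q.2 := mul_nonneg hb (hqI s)
      linarith
    · have h1 := (hfconv x hx).2 hpdom hqdom ha hb hab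
      simp only [smul_eq_mul] at h1
      have h2 : a * f x p.1 p.2 + b * f x q.1 q.2
          ≤ VBar Ky aLow abar f I x + ε := by
        calc a * f x p.1 p.2 + b * f x q.1 q.2
            ≤ a * (VBar Ky aLow abar f I x + ε) + b * (VBar Ky aLow abar f I x + ε) :=
              add_le_add (mul_le_mul_of_nonneg_left hpf ha)
                (mul_le_mul_of_nonneg_left hqf hb)
          _ = VBar Ky aLow abar f I x + ε := by rw [← add_mul, hab, one_mul]
      linarith
    · have h0 : (a • p + b • q).1 = a * p.1 + b * q.1 := rfl
      rw [h0]
      calc a * p.1 + b * q.1 ≤ a * B + b * B :=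
            add_le_add (mul_le_mul_of_nonneg_left hpa ha) (mul_le_mul_of_nonneg_left hqa hb)
        _ = B := by rw [← add_mul, hab, one_mul]
  have hΦlocal : ∀ x₀ ∈ Kx, ∃ δ : ℝ, 0 < δ ∧ ∃ pl : ℝ × (Fin ny → ℝ),
      ∀ x ∈ Kx, dist x x₀ ≤ δ → pl ∈ Φ x := by
    intro x₀ hx₀
    obtain ⟨δV, hδV, hVc⟩ := hVcomp (ε/4) (by linarith) (by linarith)
    obtain ⟨δU, hδU, hUc⟩ := hUC (ε/4) (by linarith)
    obtain ⟨p, hp, hfp⟩ := hVnear x₀ hx₀ (ε/4) (by linarith)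
    have hap : p.1 ≤ aUB + (ε/4) / Laf := haBound x₀ hx₀ p hp (ε/4) (by linarith) hfp.le
    have hapB : p.1 ≤ B := by
      have h := (div_le_div_iff_of_pos_right hLaf).mpr (show ε/4 ≤ 1 by linarith)
      rw [hB]; linarith
    set c : ℝ := 1 / (2*Laf) with hc
    clear_value c
    have hcpos : 0 < c := by rw [hc]; positivity
    have hacB : aUB + c ≤ B := by
      rw [hB, hc]
      have : 1 / (2*Laf) ≤ 1 / Laf := one_div_le_one_div_of_le hLaf (by linarith)
      linarith
    have hBabar : B ≤ abar := habar1
    have hqmargin : ∀ s, LaI * c ≤ I s x₀ (aUB + c) y₀ := by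
      intro s
      have h1 := hIslope s x₀ hx₀ y₀ hy₀ (aUB + c) aUB haUB (by linarith)
      have h2 := hfeas x₀ hx₀ y₀ hy₀ aUB le_rfl s
      have h3 : LaI * (aUB + c - aUB) = LaI * c := by ring
      linarith
    have hfq : |f x₀ (aUB + c) y₀| ≤ C :=
      hC' x₀ hx₀ (aUB + c) ⟨by linarith, by linarith⟩ y₀ hy₀
    have hfp' : |f x₀ p.1 p.2| ≤ C := hC' x₀ hx₀ p.1 hp.1 p.2 hp.2.1
    set lam : ℝ := min (1/2) (ε/(4*(2*C+1))) with hlam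
    clear_value lam
    have hlam0 : 0 < lam := by rw [hlam]; exact lt_min (by norm_num) (by positivity)
    have hlam1 : lam ≤ 1/2 := by rw [hlam]; exact min_le_left _ _
    have hlam2 : lam * (2*C) ≤ ε/4 := by
      have h1 : lam ≤ ε/(4*(2*C+1)) := by rw [hlam]; exact min_le_right _ _
      rw [le_div_iff₀ (by positivity : (0:ℝ) < 4*(2*C+1))] at h1
      nlinarith [hlam0.le]
    set pl : ℝ × (Fin ny → ℝ) := (1 - lam) • p + lam • ((aUB + c, y₀) : ℝ × (Fin ny → ℝ))
      with hpl
    have hpdom : p ∈ Set.Ici aLow ×ˢ Ky := ⟨hp.1.1, hp.2.1⟩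
    have hqdom : ((aUB + c, y₀) : ℝ × (Fin ny → ℝ)) ∈ Set.Ici aLow ×ˢ Ky :=
      ⟨by simp only [Set.mem_Ici]; linarith, hy₀⟩
    have hpldom : pl ∈ Set.Ici aLow ×ˢ Ky :=
      hconvdom hpdom hqdom (by linarith) hlam0.le (by ring)
    have hplfst : pl.1 = (1 - lam) * p.1 + lam * (aUB + c) := rfl
    have hplI : ∀ s, lam * (LaI * c) ≤ I s x₀ pl.1 pl.2 := by
      intro s
      have h1 := (hIconc s x₀ hx₀).2 hpdom hqdom
        (by linarith : (0:ℝ) ≤ 1 - lam) hlam0.le (by ring)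
      simp only [smul_eq_mul] at h1
      rw [← hpl] at h1
      have h2 := hp.2.2 s
      have h3 := hqmargin s
      nlinarith [mul_nonneg (by linarith : (0:ℝ) ≤ 1 - lam) h2,
        mul_le_mul_of_nonneg_left h3 hlam0.le]
    have hplf : f x₀ pl.1 pl.2 ≤ VBar Ky aLow abar f I x₀ + ε/2 := by
      have h1 := (hfconv x₀ hx₀).2 hpdom hqdom
        (by linarith : (0:ℝ) ≤ 1 - lam) hlam0.le (by ring)
      simp only [smul_eq_mul] at h1
      rw [← hpl] at h1
      have h2 : f x₀ (aUB + c) y₀ - f x₀ p.1 p.2 ≤ 2*C := by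
        have e1 := abs_le.mp hfq
        have e2 := abs_le.mp hfp'
        linarith [e1.2, e2.1]
      nlinarith [mul_le_mul_of_nonneg_left h2 hlam0.le]
    have hplB : pl.1 ≤ B := by
      rw [hplfst]
      nlinarith [mul_le_mul_of_nonneg_left hapB (by linarith : (0:ℝ) ≤ 1 - lam),
        mul_le_mul_of_nonneg_left hacB hlam0.le]
    have hplIcc : pl.1 ∈ Set.Icc aLow abar := ⟨hpldom.1, le_trans hplB hBabar⟩
    set δI : ℝ := (lam * (LaI * c)) / ((LI:ℝ) + 1) with hδI
    clear_value δI
    have hδIpos : 0 < δI := by rw [hδI]; positivity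
    refine ⟨min δV (min δU δI), by positivity, pl, fun x hx hdx => ?_⟩
    have hdV : dist x x₀ ≤ δV := le_trans hdx (min_le_left _ _)
    have hdU : dist x x₀ ≤ δU := le_trans hdx ((min_le_right _ _).trans (min_le_left _ _))
    have hdI : dist x x₀ ≤ δI := le_trans hdx ((min_le_right _ _).trans (min_le_right _ _))
    simp only [hΦ, Set.mem_setOf_eq]
    refine ⟨hpldom, ?_, ?_, hplB⟩
    · intro s
      have h1 := (hILip s).dist_le_mul (x, pl.1, pl.2) ⟨hx, hpldom.1, hpldom.2⟩
        (x₀, pl.1, pl.2) ⟨hx₀, hpldom.1, hpldom.2⟩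
      have hdd : dist ((x, pl.1, pl.2) : (Fin nx → ℝ) × ℝ × (Fin ny → ℝ)) (x₀, pl.1, pl.2)
          = dist x x₀ := by
        simp [Prod.dist_eq, dist_self, max_eq_left dist_nonneg]
      rw [hdd, Real.dist_eq] at h1
      have h2 := abs_le.mp h1
      have h3 := hplI s
      have h4 : (LI:ℝ) * dist x x₀ ≤ lam * (LaI * c) := by
        have h5 : (LI:ℝ) * dist x x₀ ≤ (LI:ℝ) * δI :=
          mul_le_mul_of_nonneg_left hdI LI.coe_nonneg
        have h6 : (LI:ℝ) * δI ≤ ((LI:ℝ) + 1) * δI := by nlinarith [hδIpos.le]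
        have h7 : ((LI:ℝ) + 1) * δI = lam * (LaI * c) := by
          rw [hδI]; field_simp
        linarith
      linarith [h2.1]
    · have h1 : |f x pl.1 pl.2 - f x₀ pl.1 pl.2| ≤ ε/4 :=
        hUc x hx x₀ hx₀ hdU pl.1 hplIcc pl.2 hpldom.2
      have h2 := hVc x hx x₀ hx₀ hdV
      have h3 := abs_le.mp h1
      linarith [h3.2]
  have htconv : ∀ z : ↥Kx, Convex ℝ (Φ (z : Fin nx → ℝ)) := fun z => hΦconv z z.2
  have hH : ∀ z : ↥Kx, ∃ cc : ℝ × (Fin ny → ℝ),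
      ∀ᶠ w : ↥Kx in nhds z, cc ∈ Φ (w : Fin nx → ℝ) := by
    intro z
    obtain ⟨δ, hδ, pl, hpl⟩ := hΦlocal z z.2
    refine ⟨pl, ?_⟩
    filter_upwards [Metric.closedBall_mem_nhds z hδ] with w hw
    exact hpl w w.2 (by simpa [Subtype.dist_eq] using hw)
  obtain ⟨g, hg⟩ := exists_continuous_forall_mem_convex_of_local_const htconv hH
  classical
  refine ⟨fun x => if h : x ∈ Kx then g ⟨x, h⟩ else (aUB, y₀), ?_, ?_⟩
  · rw [continuousOn_iff_continuous_restrict]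
    have hres : (Kx.restrict fun x => if h : x ∈ Kx then g ⟨x, h⟩ else (aUB, y₀)) = ⇑g := by
      funext z
      exact dif_pos z.2
    convert g.continuous using 1
    funext z
    exact dif_pos z.2
  · intro x hx
    have hmem := hg ⟨x, hx⟩
    simp only [hΦ, Set.mem_setOf_eq] at hmem
    obtain ⟨⟨hA, hY⟩, hFeas, hfV, haB⟩ := hmem
    simp only [dif_pos hx]
    exact ⟨⟨⟨hA, le_trans haB habar1⟩, hY, hFeas⟩, by linarith, haB⟩
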